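/- If k·e^{-2s/N} ≥ 8 k^{0.99} (equivalently s ≤ (0.005)·N ln k with appropriate constants), then for sufficiently large N, the probability that at most one coupon of a fixed k-subset remains undrawn after s uniform draws with replacement from N coupons is at most e^{-k^{0.99}}. -/

import Mathlib

open MeasureTheory ProbabilityTheory Filter

section Aux
open Finset



noncomputable def ccP (N s t : ℕ) : ℝ :=
  ∑ u ∈ Finset.range (t+1), (-1:ℝ)^u * (t.choose u) * (1 - u/N)^s

lemma nat_id (t u : ℕ) (hu : u ≤ t) : (t+1-u) * (t+1).choose u = (t+1) * t.choose u := by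
  have h1 : (t+1).choose u = (t+1).choose (t+1-u) := (Nat.choose_symm (by omega)).symm
  have h2 : t.choose u = t.choose (t-u) := (Nat.choose_symm hu).symm
  have h3 : (t+1) * t.choose (t-u) = (t+1).choose (t-u+1) * (t-u+1) :=
    Nat.add_one_mul_choose_eq t (t-u)
  have h4 : t + 1 - u = t - u + 1 := by omega
  rw [h1, h2, h4, h3]; ring

lemma real_id (t u : ℕ) (hu : u ≤ t + 1) :
    (((t:ℝ)+1) - u) * ((t+1).choose u) = ((t:ℝ)+1) * (t.choose u) := by
  rcases eq_or_lt_of_le hu with h | h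
  · subst h
    have : t.choose (t+1) = 0 := Nat.choose_eq_zero_of_lt (by omega)
    push_cast [this]; ring
  · have hu' : u ≤ t := by omega
    have := nat_id t u hu'
    have hc : (((t+1-u : ℕ)) : ℝ) = ((t:ℝ)+1) - u := by push_cast [Nat.cast_sub (by omega : u ≤ t+1)]; ring
    calc (((t:ℝ)+1) - u) * ((t+1).choose u) = (((t+1-u : ℕ)) : ℝ) * ((t+1).choose u) := by rw [hc]
      _ = (((t+1-u) * (t+1).choose u : ℕ) : ℝ) := by push_cast; ring
      _ = (((t+1) * t.choose u : ℕ) : ℝ) := by rw [this]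
      _ = ((t:ℝ)+1) * (t.choose u) := by push_cast; ring

lemma binom_aux (a d : ℝ) (ha : 0 ≤ a) (hd : 0 ≤ d) (t : ℕ) :
    a ^ (t+1) + (t+1) * a ^ t * d ≤ (a + d) ^ (t+1) := by
  induction t with
  | zero => simp
  | succ n ih =>
    have hn : (0:ℝ) ≤ (n+1) * a ^ n * d^2 := by positivity
    have e : (a+d) * (a ^ (n+1) + ((n:ℝ)+1) * a ^ n * d)
        = a ^ (n+2) + ((n:ℝ)+2) * a ^ (n+1) * d + ((n:ℝ)+1) * a ^ n * d^2 := by ring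
    have h2 : (a + d) * (a ^ (n+1) + ((n:ℝ)+1) * a ^ n * d) ≤ (a + d) * (a + d) ^ (n+1) :=
      mul_le_mul_of_nonneg_left ih (by positivity)
    have : a ^ (n+2) + ((n:ℝ)+2) * a ^ (n+1) * d ≤ (a + d) ^ (n+2) := by
      have h3 : (a+d)*(a+d)^(n+1) = (a+d)^(n+2) := by ring
      linarith [e ▸ h2, h3 ▸ h2]
    push_cast
    convert this using 2 <;> push_cast <;> ring

lemma ccP_succ (N s t : ℕ) :
    ccP N (s+1) (t+1) = (1 - ((t:ℝ)+1)/N) * ccP N s (t+1) + (((t:ℝ)+1)/N) * ccP N s t := by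
  have key : ∀ u ∈ Finset.range (t+2),
      (-1:ℝ)^u * ((t+1).choose u) * (1 - u/N)^(s+1)
        = (1 - ((t:ℝ)+1)/N) * ((-1:ℝ)^u * ((t+1).choose u) * (1 - u/N)^s)
          + (((t:ℝ)+1)/N) * ((-1:ℝ)^u * (t.choose u) * (1 - u/N)^s) := by
    intro u hu
    have hu' : u ≤ t + 1 := by
      have := Finset.mem_range.mp hu; omega
    have h := real_id t u hu'
    rw [pow_succ]
    linear_combination ((-1:ℝ)^u * (1 - u/N)^s / N) * h
  have e2 : ∑ u ∈ Finset.range (t+2), (-1:ℝ)^u * (t.choose u) * (1 - u/N)^s = ccP N s t := by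
    rw [Finset.sum_range_succ]
    simp [ccP, Nat.choose_succ_self]
  calc ccP N (s+1) (t+1)
      = ∑ u ∈ Finset.range (t+2), ((1 - ((t:ℝ)+1)/N) * ((-1:ℝ)^u * ((t+1).choose u) * (1 - u/N)^s)
          + (((t:ℝ)+1)/N) * ((-1:ℝ)^u * (t.choose u) * (1 - u/N)^s)) :=
        Finset.sum_congr rfl key
    _ = (1 - ((t:ℝ)+1)/N) * ccP N s (t+1) + (((t:ℝ)+1)/N) * ccP N s t := by
        rw [Finset.sum_add_distrib, ← Finset.mul_sum, ← Finset.mul_sum, e2]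
        rfl

lemma ccP_le (N s t : ℕ) (ht : t ≤ N) :
    ccP N s t ≤ (1 - (1 - 1/(N:ℝ))^s)^t := by
  induction s generalizing t with
  | zero =>
    rcases Nat.eq_zero_or_pos t with h | h
    · subst h; simp [ccP]
    · have h0 : ccP N 0 t = 0 := by
        have hInt := Int.alternating_sum_range_choose_of_ne (n := t) (by omega)
        have e : ccP N 0 t = ((∑ i ∈ Finset.range (t+1), (-1:ℤ)^i * (t.choose i) : ℤ) : ℝ) := by
          unfold ccP; push_cast; simp
        rw [e, hInt]; simp
      rw [h0]
      simp [zero_pow (by omega : t ≠ 0)]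
  | succ s ih =>
    cases t with
    | zero => simp [ccP]
    | succ t =>
      have hN : 0 < N := by omega
      set q : ℝ := 1 - 1/(N:ℝ) with hq
      have hN' : (0:ℝ) < N := by exact_mod_cast hN
      have hq0 : 0 ≤ q := by
        rw [hq]; have : 1/(N:ℝ) ≤ 1 := by
          rw [div_le_one hN']; exact_mod_cast hN
        linarith
      have hq1 : q ≤ 1 := by rw [hq]; have : 0 ≤ 1/(N:ℝ) := by positivity
                             linarith
      have ha0 : 0 ≤ 1 - q^s := by
        have := pow_le_one₀ hq0 hq1 (n := s); linarith
      have hc1 : (0:ℝ) ≤ 1 - ((t:ℝ)+1)/N := by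
        rw [sub_nonneg, div_le_one hN']
        exact_mod_cast ht
      have hc2 : (0:ℝ) ≤ ((t:ℝ)+1)/N := by positivity
      have h1 := ih (t+1) ht
      have h2 := ih t (by omega)
      rw [ccP_succ]
      have step1 : ccP N (s+1) (t+1)
          ≤ (1 - ((t:ℝ)+1)/N) * (1-q^s)^(t+1) + (((t:ℝ)+1)/N) * (1-q^s)^t := by
        rw [ccP_succ]
        gcongr
      have step2 : (1 - ((t:ℝ)+1)/N) * (1-q^s)^(t+1) + (((t:ℝ)+1)/N) * (1-q^s)^t
          = (1-q^s)^(t+1) + ((t:ℝ)+1) * (1-q^s)^t * (q^s/N) := by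
        ring
      have step3 : (1-q^s)^(t+1) + ((t:ℝ)+1) * (1-q^s)^t * (q^s/N)
          ≤ ((1-q^s) + q^s/N)^(t+1) := by
        have := binom_aux (1-q^s) (q^s/N) ha0 (by positivity) t
        push_cast at this ⊢
        linarith
      have step4 : (1-q^s) + q^s/N = 1 - q^(s+1) := by
        rw [pow_succ, hq]; field_simp; ring
      calc (1 - ((t:ℝ)+1)/N) * ccP N s (t+1) + (((t:ℝ)+1)/N) * ccP N s t
          ≤ (1 - ((t:ℝ)+1)/N) * (1-q^s)^(t+1) + (((t:ℝ)+1)/N) * (1-q^s)^t := by gcongr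
        _ = (1-q^s)^(t+1) + ((t:ℝ)+1) * (1-q^s)^t * (q^s/N) := step2
        _ ≤ ((1-q^s) + q^s/N)^(t+1) := step3
        _ = (1 - q^(s+1))^(t+1) := by rw [step4]


variable {Ωt : Type*} [MeasurableSpace Ωt] {μ : Measure Ωt} [IsProbabilityMeasure μ]
  {m n : ℕ} {D : Fin m → Ωt → Fin n}

lemma miss_prob (hmeas : ∀ i, Measurable (D i))
    (hunif : ∀ i j, (μ {ω | D i ω = j}).toReal = 1/n)
    (hind : iIndepFun D μ) (U : Finset (Fin n)) :
    (μ {ω | ∀ i, D i ω ∉ U}).toReal = (1 - (U.card:ℝ)/n) ^ m := by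
  have hset : {ω | ∀ i, D i ω ∉ U}
      = ⋂ i ∈ (Finset.univ : Finset (Fin m)), D i ⁻¹' ((↑U : Set (Fin n))ᶜ) := by
    ext ω; simp
  have hprod := hind.measure_inter_preimage_eq_mul Finset.univ
      (sets := fun _ => (↑U : Set (Fin n))ᶜ) (fun i _ => .of_discrete)
  have hfac : ∀ i : Fin m, (μ (D i ⁻¹' (↑U : Set (Fin n))ᶜ)).toReal = 1 - (U.card:ℝ)/n := by
    intro i
    have hUm : MeasurableSet (D i ⁻¹' (↑U : Set (Fin n))) := (hmeas i) .of_discrete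
    have hU : (μ (D i ⁻¹' (↑U : Set (Fin n)))).toReal = (U.card:ℝ)/n := by
      have e : D i ⁻¹' (↑U : Set (Fin n)) = ⋃ j ∈ U, D i ⁻¹' {j} := by ext ω; simp
      rw [e, measure_biUnion_finset]
      · rw [ENNReal.toReal_sum (fun j _ => measure_ne_top μ _)]
        have : ∀ j ∈ U, (μ (D i ⁻¹' ({j} : Set (Fin n)))).toReal = 1/n := by
          intro j _
          have : D i ⁻¹' ({j} : Set (Fin n)) = {ω | D i ω = j} := by ext ω; simp
          rw [this]; exact hunif i j
        rw [Finset.sum_congr rfl this, Finset.sum_const, nsmul_eq_mul]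
        ring
      · intro a _ b _ hab
        simp only [Set.disjoint_left]
        intro ω h1 h2
        simp only [Set.mem_preimage, Set.mem_singleton_iff] at h1 h2
        exact hab (h1 ▸ h2)
      · exact fun j _ => (hmeas i) .of_discrete
    rw [Set.preimage_compl, measure_compl hUm (measure_ne_top μ _), measure_univ,
      ENNReal.toReal_sub_of_le prob_le_one ENNReal.one_ne_top]
    simp [hU]
  rw [hset, hprod, ENNReal.toReal_prod]
  rw [Finset.prod_congr rfl (fun i _ => hfac i), Finset.prod_const]
  simp

lemma cover_prob (hmeas : ∀ i, Measurable (D i)) (T : Finset (Fin n)) :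
    (μ {ω | ∀ j ∈ T, ∃ i, D i ω = j}).toReal
      = ∑ U ∈ T.powerset, (-1:ℝ)^U.card * (μ {ω | ∀ i, D i ω ∉ U}).toReal := by
  classical
  set A : Fin n → Set Ωt := fun j => {ω | ∀ i, D i ω ≠ j} with hA
  have hAmeas : ∀ j, MeasurableSet (A j) := by
    intro j
    have : A j = ⋂ i, D i ⁻¹' ({j}ᶜ) := by ext ω; simp [hA]
    rw [this]
    exact MeasurableSet.iInter fun i => (hmeas i) .of_discrete
  have hInter : ∀ U : Finset (Fin n), (⋂ j ∈ U, A j) = {ω | ∀ i, D i ω ∉ U} := by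
    intro U; ext ω
    simp only [hA, Set.mem_iInter, Set.mem_setOf_eq]
    exact ⟨fun h i hiU => h _ hiU i rfl, fun h j hj i hD => h i (hD ▸ hj)⟩
  have hIm : ∀ U : Finset (Fin n), MeasurableSet (⋂ j ∈ U, A j) :=
    fun U => MeasurableSet.biInter U.countable_toSet fun j _ => hAmeas j
  have hC : {ω | ∀ j ∈ T, ∃ i, D i ω = j} = ⋂ j ∈ T, (A j)ᶜ := by
    ext ω; simp [hA]
  have hCm : MeasurableSet {ω | ∀ j ∈ T, ∃ i, D i ω = j} := by
    rw [hC]; exact MeasurableSet.biInter T.countable_toSet fun j _ => (hAmeas j).compl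
  -- pointwise identity
  have hpt : ∀ ω, Set.indicator {ω | ∀ j ∈ T, ∃ i, D i ω = j} (fun _ => (1:ℝ)) ω
      = ∑ U ∈ T.powerset, (-1:ℝ)^U.card * Set.indicator (⋂ j ∈ U, A j) (fun _ => (1:ℝ)) ω := by
    intro ω
    have e1 : ∀ U : Finset (Fin n),
        Set.indicator (⋂ j ∈ U, A j) (fun _ => (1:ℝ)) ω = ∏ j ∈ U, Set.indicator (A j) (fun _ => (1:ℝ)) ω := by
      intro U
      by_cases h : ω ∈ ⋂ j ∈ U, A j
      · rw [Set.indicator_of_mem h]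
        simp only [Set.mem_iInter] at h
        exact (Finset.prod_eq_one fun j hj => Set.indicator_of_mem (h j hj) _).symm
      · rw [Set.indicator_of_notMem h]
        simp only [Set.mem_iInter, not_forall] at h
        obtain ⟨j, hj, hωj⟩ := h
        exact (Finset.prod_eq_zero hj (by rw [Set.indicator_of_notMem hωj])).symm
    have e2 : Set.indicator {ω | ∀ j ∈ T, ∃ i, D i ω = j} (fun _ => (1:ℝ)) ω
        = ∏ j ∈ T, ((1:ℝ) - Set.indicator (A j) (fun _ => (1:ℝ)) ω) := by
      by_cases h : ω ∈ {ω | ∀ j ∈ T, ∃ i, D i ω = j}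
      · rw [Set.indicator_of_mem h]
        refine (Finset.prod_eq_one fun j hj => ?_).symm
        have : ω ∉ A j := by
          simp only [Set.mem_setOf_eq] at h
          obtain ⟨i, hi⟩ := h j hj
          simp [hA]; exact ⟨i, hi⟩
        rw [Set.indicator_of_notMem this]; ring
      · rw [Set.indicator_of_notMem h]
        simp only [Set.mem_setOf_eq, not_forall] at h
        obtain ⟨j, hj, hωj⟩ := h
        have : ω ∈ A j := by simp [hA]; intro i; exact fun hh => hωj ⟨i, hh⟩
        refine (Finset.prod_eq_zero hj ?_).symm
        rw [Set.indicator_of_mem this]; ring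
    rw [e2, Finset.prod_sub]
    refine Finset.sum_congr rfl fun U hU => ?_
    rw [e1 U]
    simp [mul_assoc]
  -- integrate
  have hint : ∀ U : Finset (Fin n),
      Integrable (fun ω => (-1:ℝ)^U.card * Set.indicator (⋂ j ∈ U, A j) (fun _ => (1:ℝ)) ω) μ :=
    fun U => ((integrable_const (1:ℝ)).indicator (hIm U)).const_mul _
  calc (μ {ω | ∀ j ∈ T, ∃ i, D i ω = j}).toReal
      = ∫ ω, Set.indicator {ω | ∀ j ∈ T, ∃ i, D i ω = j} (fun _ => (1:ℝ)) ω ∂μ := by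
        rw [integral_indicator_const _ hCm]; simp [Measure.real]
    _ = ∫ ω, ∑ U ∈ T.powerset, (-1:ℝ)^U.card * Set.indicator (⋂ j ∈ U, A j) (fun _ => (1:ℝ)) ω ∂μ := by
        exact integral_congr_ae (Filter.Eventually.of_forall hpt)
    _ = ∑ U ∈ T.powerset, ∫ ω, (-1:ℝ)^U.card * Set.indicator (⋂ j ∈ U, A j) (fun _ => (1:ℝ)) ω ∂μ :=
        integral_finset_sum _ (fun U _ => hint U)
    _ = ∑ U ∈ T.powerset, (-1:ℝ)^U.card * (μ {ω | ∀ i, D i ω ∉ U}).toReal := by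
        refine Finset.sum_congr rfl fun U hU => ?_
        rw [integral_const_mul, integral_indicator_const _ (hIm U)]
        rw [hInter U] at *
        simp [Measure.real]


-- pure-real final estimate
lemma final_numeric (k : ℕ) (x c : ℝ) (hk : 1 ≤ k) (hx0 : 0 < x) (hx1 : x ≤ 1)
    (hlb : 8 * (k:ℝ) ^ (0.99:ℝ) ≤ k * x) (hc : c ≤ Real.exp (-(((k:ℕ) - 1 : ℕ):ℝ) * x)) (hc0 : 0 ≤ c) :
    (k:ℝ) * c ≤ Real.exp (-(k:ℝ) ^ (0.99:ℝ)) := by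
  have hk1 : (1:ℝ) ≤ k := by exact_mod_cast hk
  have hkpos : (0:ℝ) < k := by linarith
  have hr1 : (1:ℝ) ≤ (k:ℝ) ^ (0.99:ℝ) := Real.one_le_rpow hk1 (by norm_num)
  have hlog : Real.log k ≤ 2 * (k:ℝ) ^ (0.99:ℝ) := by
    have := Real.log_le_rpow_div (x := (k:ℝ)) (ε := 0.99) (by positivity) (by norm_num)
    have h2 : (k:ℝ) ^ (0.99:ℝ) / 0.99 ≤ 2 * (k:ℝ) ^ (0.99:ℝ) := by
      rw [div_le_iff₀ (by norm_num)]; nlinarith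
    linarith
  have hcast : (((k:ℕ) - 1 : ℕ):ℝ) = (k:ℝ) - 1 := by
    push_cast [Nat.cast_sub hk]; ring
  have h1 : ((k:ℝ) - 1) * x ≥ 8 * (k:ℝ) ^ (0.99:ℝ) - 1 := by nlinarith
  calc (k:ℝ) * c ≤ (k:ℝ) * Real.exp (-(((k:ℕ) - 1 : ℕ):ℝ) * x) := by
        exact mul_le_mul_of_nonneg_left hc hkpos.le
    _ = Real.exp (Real.log k - ((k:ℝ)-1) * x) := by
        rw [Real.exp_sub, Real.exp_log hkpos, hcast]
        rw [neg_mul, Real.exp_neg]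
        field_simp
    _ ≤ Real.exp (-(k:ℝ) ^ (0.99:ℝ)) := by
        apply Real.exp_le_exp.2
        nlinarith


lemma cover_prob_le (hmeas : ∀ i, Measurable (D i))
    (hunif : ∀ i j, (μ {ω | D i ω = j}).toReal = 1/n)
    (hind : iIndepFun D μ) (T : Finset (Fin n)) :
    (μ {ω | ∀ j ∈ T, ∃ i, D i ω = j}).toReal ≤ (1 - (1 - 1/(n:ℝ))^m)^T.card := by
  rw [cover_prob hmeas T]
  have e4 := Finset.sum_powerset_apply_card
    (f := fun c : ℕ => (-1:ℝ)^c * (1 - (c:ℝ)/n)^m) (x := T)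
  have e2 : (∑ U ∈ T.powerset, (-1:ℝ)^U.card * (μ {ω | ∀ i, D i ω ∉ U}).toReal)
      = ccP n m T.card := by
    calc (∑ U ∈ T.powerset, (-1:ℝ)^U.card * (μ {ω | ∀ i, D i ω ∉ U}).toReal)
        = ∑ U ∈ T.powerset, (-1:ℝ)^U.card * (1 - (U.card:ℝ)/n)^m :=
          Finset.sum_congr rfl (fun U _ => by rw [miss_prob hmeas hunif hind U])
      _ = ∑ i ∈ Finset.range (T.card+1), T.card.choose i • ((-1:ℝ)^i * (1 - (i:ℝ)/n)^m) := e4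
      _ = ccP n m T.card := by
          unfold ccP
          refine Finset.sum_congr rfl fun u _ => ?_
          rw [nsmul_eq_mul]; ring
  rw [e2]
  exact ccP_le n m T.card (by simpa using T.card_le_univ)


end Aux

section Aux2
open Finset

/-- Coupon collector with `N` coupons, a fixed subset `S(N)` of size `k(N) → ∞`,
and `s(N)` independent uniform draws with replacement. If
`k e^{-2s/N} ≥ 8 k^{0.99}`, then for `N` large enough the probability that at
most one coupon of `S(N)` remains undrawn is at most `e^{-k^{0.99}}`. -/
theorem at_most_one_missed_coupon
    (k s : ℕ → ℕ) (hk : Tendsto k atTop atTop)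
    (Ω : ℕ → Type*) [∀ N, MeasurableSpace (Ω N)]
    (μ : ∀ N, Measure (Ω N)) [∀ N, IsProbabilityMeasure (μ N)]
    (D : ∀ N, Fin (s N) → Ω N → Fin N)
    (hmeas : ∀ N i, Measurable (D N i))
    (hunif : ∀ N, 0 < N → ∀ i j, ((μ N) {ω | D N i ω = j}).toReal = 1 / N)
    (hind : ∀ N, iIndepFun (D N) (μ N))
    (S : ∀ N, Finset (Fin N)) (hS : ∀ N, (S N).card = k N)
    (hlb : ∀ᶠ N in atTop,
      8 * (k N : ℝ) ^ (0.99 : ℝ) ≤ (k N : ℝ) * Real.exp (-2 * s N / N)) :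
    ∀ᶠ N in atTop,
      ((μ N) {ω | ((S N).filter (fun j => ∀ i, D N i ω ≠ j)).card ≤ 1}).toReal
        ≤ Real.exp (-(k N : ℝ) ^ (0.99 : ℝ)) := by
  filter_upwards [hlb, hk.eventually_ge_atTop 1, Filter.eventually_ge_atTop 2] with N hlbN hk1 hN2
  set x := Real.exp (-2 * s N / N) with hxdef
  have hNpos : 0 < N := by omega
  have hNR : (0:ℝ) < N := by exact_mod_cast hNpos
  set q : ℝ := 1 - 1/(N:ℝ) with hq
  -- q^s ≥ x
  have hq0 : 0 ≤ q := by
    rw [hq, sub_nonneg]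
    rw [div_le_one hNR]; exact_mod_cast hNpos
  have hN2R : (2:ℝ) ≤ N := by exact_mod_cast hN2
  have hu2 : 1/(N:ℝ) ≤ 1/2 := one_div_le_one_div_of_le (by norm_num) hN2R
  have hu0 : (0:ℝ) ≤ 1/(N:ℝ) := by positivity
  have hkey : Real.exp (-(2 * (1/(N:ℝ)))) ≤ q := by
    have h1 : 1 + 2*(1/(N:ℝ)) ≤ Real.exp (2*(1/(N:ℝ))) := by
      have := Real.add_one_le_exp (2*(1/(N:ℝ))); linarith
    have hpos : (0:ℝ) < 1 + 2*(1/(N:ℝ)) := by linarith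
    rw [Real.exp_neg]
    calc (Real.exp (2*(1/(N:ℝ))))⁻¹ ≤ (1 + 2*(1/(N:ℝ)))⁻¹ := by
          apply inv_anti₀ hpos h1
      _ ≤ q := by
          rw [hq, inv_eq_one_div, div_le_iff₀ hpos]
          nlinarith
  have hx_le_q : x ≤ q ^ (s N) := by
    have e : x = (Real.exp (-(2 * (1/(N:ℝ)))))^(s N) := by
      rw [hxdef, ← Real.exp_nat_mul]
      congr 1
      ring
    rw [e]
    exact pow_le_pow_left₀ (Real.exp_pos _).le hkey _
  have hx1 : x ≤ 1 := by
    rw [hxdef]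
    apply Real.exp_le_one_iff.2
    apply div_nonpos_of_nonpos_of_nonneg _ hNR.le
    have hs0 : (0:ℝ) ≤ (s N : ℝ) := Nat.cast_nonneg _
    nlinarith
  -- subset of union of cover events
  have hSne : (S N).Nonempty := Finset.card_pos.mp (by rw [hS]; omega)
  have hsub : {ω | ((S N).filter (fun j => ∀ i, D N i ω ≠ j)).card ≤ 1}
      ⊆ ⋃ j ∈ S N, {ω | ∀ j' ∈ (S N).erase j, ∃ i, D N i ω = j'} := by
    intro ω hω
    simp only [Set.mem_setOf_eq] at hω
    set F := (S N).filter (fun j => ∀ i, D N i ω ≠ j) with hF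
    have hFS : F ⊆ S N := Finset.filter_subset _ _
    obtain ⟨j0, hj0S, hsub'⟩ : ∃ j0 ∈ S N, F ⊆ {j0} := by
      haveI : Nonempty (Fin N) := ⟨⟨0, hNpos⟩⟩
      obtain ⟨j1, hj1⟩ := hSne
      rcases F.eq_empty_or_nonempty with h | h
      · exact ⟨j1, hj1, by simp [h]⟩
      · obtain ⟨j0, hj0⟩ := Finset.card_le_one_iff_subset_singleton.mp hω
        refine ⟨j0, ?_, hj0⟩
        obtain ⟨a, ha⟩ := h
        have := hj0 ha
        simp only [Finset.mem_singleton] at this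
        exact this ▸ hFS ha
    simp only [Set.mem_iUnion]
    refine ⟨j0, hj0S, ?_⟩
    intro j' hj'
    have hj'F : j' ∉ F := fun hmem => by
      have := hsub' hmem
      simp only [Finset.mem_singleton] at this
      exact (Finset.ne_of_mem_erase hj') this
    rw [hF, Finset.mem_filter] at hj'F
    push_neg at hj'F
    obtain ⟨i, hi⟩ := hj'F (Finset.mem_of_mem_erase hj')
    exact ⟨i, hi⟩
  -- probability bound
  have hcard : ∀ j ∈ S N, ((S N).erase j).card = k N - 1 := by
    intro j hj; rw [Finset.card_erase_of_mem hj, hS]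
  have hcover : ∀ j ∈ S N,
      ((μ N) {ω | ∀ j' ∈ (S N).erase j, ∃ i, D N i ω = j'}).toReal
        ≤ Real.exp (-((k N - 1 : ℕ):ℝ) * x) := by
    intro j hj
    have h1 := cover_prob_le (μ := μ N) (D := D N) (hmeas N) (hunif N hNpos) (hind N)
      ((S N).erase j)
    rw [hcard j hj] at h1
    refine h1.trans ?_
    set t := k N - 1
    have hq1 : q ≤ 1 := by rw [hq]; linarith
    have ha0 : 0 ≤ 1 - q ^ (s N) := by
      have := pow_le_one₀ hq0 hq1 (n := s N); linarith
    calc (1 - q ^ (s N))^t ≤ (Real.exp (-(q ^ (s N))))^t := by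
          apply pow_le_pow_left₀ ha0
          have := Real.add_one_le_exp (-(q ^ (s N)))
          linarith
      _ = Real.exp ((t:ℝ) * -(q ^ (s N))) := (Real.exp_nat_mul _ t).symm
      _ ≤ Real.exp (-((t:ℕ):ℝ) * x) := by
          apply Real.exp_le_exp.2
          have ht0 : (0:ℝ) ≤ (t:ℝ) := Nat.cast_nonneg t
          nlinarith [mul_le_mul_of_nonneg_left hx_le_q ht0]
  -- combine
  have hmeasCover : ∀ j ∈ S N, MeasurableSet {ω | ∀ j' ∈ (S N).erase j, ∃ i, D N i ω = j'} := by
    intro j hj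
    have : {ω | ∀ j' ∈ (S N).erase j, ∃ i, D N i ω = j'}
        = ⋂ j' ∈ (S N).erase j, ⋃ i, (D N i) ⁻¹' {j'} := by
      ext ω; simp
    rw [this]
    exact MeasurableSet.biInter (Finset.countable_toSet _)
      fun j' _ => MeasurableSet.iUnion fun i => (hmeas N i) .of_discrete
  have hstep : ((μ N) {ω | ((S N).filter (fun j => ∀ i, D N i ω ≠ j)).card ≤ 1}).toReal
      ≤ ∑ j ∈ S N, ((μ N) {ω | ∀ j' ∈ (S N).erase j, ∃ i, D N i ω = j'}).toReal := by
    have h1 : (μ N) {ω | ((S N).filter (fun j => ∀ i, D N i ω ≠ j)).card ≤ 1}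
        ≤ ∑ j ∈ S N, (μ N) {ω | ∀ j' ∈ (S N).erase j, ∃ i, D N i ω = j'} :=
      (measure_mono hsub).trans (measure_biUnion_finset_le _ _)
    have h2 := ENNReal.toReal_mono (by
      exact (ENNReal.sum_ne_top).2 fun j _ => measure_ne_top _ _) h1
    rwa [ENNReal.toReal_sum (fun j _ => measure_ne_top _ _)] at h2
  refine hstep.trans ?_
  calc ∑ j ∈ S N, ((μ N) {ω | ∀ j' ∈ (S N).erase j, ∃ i, D N i ω = j'}).toReal
      ≤ ∑ j ∈ S N, Real.exp (-((k N - 1 : ℕ):ℝ) * x) := Finset.sum_le_sum hcover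
    _ = (k N : ℝ) * Real.exp (-((k N - 1 : ℕ):ℝ) * x) := by
        rw [Finset.sum_const, hS, nsmul_eq_mul]
    _ ≤ Real.exp (-(k N : ℝ) ^ (0.99 : ℝ)) :=
        final_numeric (k N) x _ hk1 (Real.exp_pos _) hx1 hlbN le_rfl (Real.exp_pos _).le

end Aux2
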